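/- Barbalat's lemma: if g : ℝ → ℝ is continuously differentiable, g(t) converges to a finite limit as t → ∞, and g' is uniformly continuous on [0,∞), then g'(t) → 0 as t → ∞. -/

import Mathlib

open Filter

/-- Barbalat's lemma: if `g : ℝ → ℝ` is continuously differentiable, `g(t)` converges
to a finite limit as `t → ∞`, and `g'` is uniformly continuous on `[0, ∞)`, then
`g'(t) → 0` as `t → ∞`. -/
theorem stmt_13 (g : ℝ → ℝ) (hg : ContDiff ℝ 1 g)
    (huc : UniformContinuousOn (deriv g) (Set.Ici 0))
    (hlim : ∃ L : ℝ, Tendsto g atTop (nhds L)) :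
    Tendsto (deriv g) atTop (nhds 0) := by
  obtain ⟨L, hL⟩ := hlim
  have hdiff : Differentiable ℝ g := hg.differentiable one_ne_zero
  have hdc : Continuous (deriv g) := hg.continuous_deriv le_rfl
  by_contra hcon
  rw [Metric.tendsto_atTop] at hcon
  push_neg at hcon
  obtain ⟨ε, hε, hbad⟩ := hcon
  rw [Metric.uniformContinuousOn_iff] at huc
  obtain ⟨δ, hδ, hδ'⟩ := huc (ε/2) (by positivity)
  rw [Metric.tendsto_atTop] at hL
  obtain ⟨N, hN⟩ := hL (ε*δ/16) (by positivity)
  obtain ⟨t, ht, htε⟩ := hbad (max N 0)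
  set d := δ/2 with hd
  have hd0 : 0 < d := by positivity
  have ht0 : 0 ≤ t := le_trans (le_max_right N 0) ht
  have htN : N ≤ t := le_trans (le_max_left N 0) ht
  have habs : ε ≤ |deriv g t| := by
    simpa [Real.dist_eq] using htε
  -- nearby derivative values are close
  have hclose : ∀ s ∈ Set.Icc t (t + d), |deriv g s - deriv g t| < ε/2 := by
    intro s hs
    have hs0 : (0:ℝ) ≤ s := le_trans ht0 hs.1
    have : dist s t < δ := by
      rw [Real.dist_eq, abs_of_nonneg (by linarith [hs.1])]
      have := hs.2
      linarith
    have := hδ' s hs0 t ht0 this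
    simpa [Real.dist_eq] using this
  -- FTC
  have hint : IntervalIntegrable (deriv g) MeasureTheory.volume t (t + d) :=
    hdc.intervalIntegrable _ _
  have hftc : ∫ s in t..(t + d), deriv g s = g (t + d) - g t :=
    intervalIntegral.integral_deriv_eq_sub (fun x _ => hdiff x) hint
  -- the limit forces small increments
  have hsmall : |g (t + d) - g t| < ε * δ / 8 := by
    have h1 := hN t htN
    have h2 := hN (t + d) (by linarith)
    rw [Real.dist_eq] at h1 h2
    have : |g (t + d) - g t| ≤ |g (t+d) - L| + |g t - L| := by
      have := abs_sub_abs_le_abs_sub (g (t+d) - L) (g t - L)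
      calc |g (t + d) - g t| = |(g (t+d) - L) - (g t - L)| := by ring_nf
        _ ≤ |g (t+d) - L| + |g t - L| := abs_sub _ _
    linarith
  have hεd : ε * δ / 8 < d * (ε/2) := by
    rw [hd]; nlinarith
  rcases le_or_gt ε (deriv g t) with hpos | hneg
  · -- deriv g t ≥ ε : deriv g ≥ ε/2 on the interval
    have hlow : ∀ s ∈ Set.Icc t (t + d), ε/2 ≤ deriv g s := by
      intro s hs
      have := hclose s hs
      have := abs_lt.mp this
      linarith [this.1]
    have hmono : (∫ _ in t..(t+d), (ε/2)) ≤ ∫ s in t..(t+d), deriv g s := by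
      apply intervalIntegral.integral_mono_on (by linarith) (intervalIntegrable_const) hint
      exact hlow
    rw [intervalIntegral.integral_const] at hmono
    simp only [smul_eq_mul] at hmono
    have : d * (ε/2) ≤ g (t+d) - g t := by
      rw [← hftc]
      calc d * (ε/2) = (t + d - t) * (ε/2) := by ring_nf
        _ ≤ _ := hmono
    have := le_abs_self (g (t+d) - g t)
    linarith
  · -- deriv g t ≤ -ε
    have hneg' : deriv g t ≤ -ε := by
      rcases abs_le.mp (le_of_eq rfl : |deriv g t| ≤ |deriv g t|) with ⟨h1, h2⟩
      rcases le_or_gt (deriv g t) 0 with h | h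
      · have : |deriv g t| = -(deriv g t) := abs_of_nonpos h
        linarith [habs.trans_eq this]
      · have : |deriv g t| = deriv g t := abs_of_pos h
        linarith [habs.trans_eq this]
    have hup : ∀ s ∈ Set.Icc t (t + d), deriv g s ≤ -(ε/2) := by
      intro s hs
      have := abs_lt.mp (hclose s hs)
      linarith [this.2]
    have hmono : (∫ s in t..(t+d), deriv g s) ≤ ∫ _ in t..(t+d), (-(ε/2)) := by
      apply intervalIntegral.integral_mono_on (by linarith) hint (intervalIntegrable_const)
      exact hup
    rw [intervalIntegral.integral_const] at hmono
    simp only [smul_eq_mul] at hmono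
    have : g (t+d) - g t ≤ -(d * (ε/2)) := by
      rw [← hftc]
      calc (∫ s in t..(t+d), deriv g s) ≤ (t + d - t) * (-(ε/2)) := hmono
        _ = -(d * (ε/2)) := by ring
    have := neg_abs_le (g (t+d) - g t)
    linarith
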